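/- Let r ≥ 2 be an even integer and let m ≥ 1 and k be integers with 10m ≤ k. There exists an r-edge-colored graph H' = (H'_1, …, H'_r) with χ(H') = k and reduced maximum matching number M(H') ≥ m such that for every n divisible by r(k−2m−1) there exist simple graphs G_1, …, G_r on a common vertex set of size n with e(G_i) ≥ C(n,2) − n²/(2r(k−2m−1)) for every i ∈ [r], whose colored union contains no copy of H'. -/

import Mathlib

open SimpleGraph Set

/-- The colored union of the graphs `G i` (all on the common vertex set `W`) contains a
copy of the `r`-edge-colored graph `H`. -/
def ContainsCopy {r : ℕ} {V W : Type*} (G : Fin r → SimpleGraph W)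
    (H : Fin r → SimpleGraph V) : Prop :=
  ∃ φ : V ↪ W, ∀ (i : Fin r) (u v : V), (H i).Adj u v → (G i).Adj (φ u) (φ v)

/-- The `r`-edge-colored graph `H` admits a proper coloring of `H 0 ∪ ⋯ ∪ H (r-1)` with `χ`
colors together with `m` pairwise disjoint single-colored pairs of color classes, i.e. pairs
of distinct classes that are joined by edges of exactly one of the `r` colors. Hence the
reduced maximum matching number of `H` is at least `m` (when `χ = χ(H)`). -/
def HasRMMatching {r : ℕ} {V : Type*} (H : Fin r → SimpleGraph V) (χ m : ℕ) : Prop :=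
  ∃ C : (⨆ i, H i).Coloring (Fin χ), ∃ p : Fin m → Fin χ × Fin χ,
    Function.Injective (fun x : Fin m × Bool => if x.2 then (p x.1).1 else (p x.1).2) ∧
    (∀ j, (p j).1 ≠ (p j).2) ∧
    (∀ j : Fin m, ∃! c : Fin r,
      ∃ u v : V, (H c).Adj u v ∧ C u = (p j).1 ∧ C v = (p j).2)

open Finset

def Hc (r k m : ℕ) (c : Fin r) : SimpleGraph (Fin k) where
  Adj u v := u ≠ v ∧ ((c : ℕ) = 0 ∨ ¬((u:ℕ)/2 = (v:ℕ)/2 ∧ (u:ℕ)/2 < m))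
  symm := by
    constructor
    rintro u v ⟨h1, h2⟩
    refine ⟨h1.symm, ?_⟩
    rcases h2 with h | h
    · exact Or.inl h
    · exact Or.inr fun ⟨a, b⟩ => h ⟨a.symm, a ▸ b⟩
  loopless := ⟨fun u h => h.1 rfl⟩

def Gc (t r q : ℕ) (c : Fin r) : SimpleGraph (Fin t × Fin r × Fin q) where
  Adj u v := u ≠ v ∧ ¬(u.1 = v.1 ∧ u.2.1 + v.2.1 = c)
  symm := by
    constructor
    rintro u v ⟨h1, h2⟩
    exact ⟨h1.symm, fun ⟨a, b⟩ => h2 ⟨a.symm, by rw [add_comm]; exact b⟩⟩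
  loopless := ⟨fun u h => h.1 rfl⟩

instance (t r q : ℕ) (c : Fin r) : DecidableRel (Gc t r q c).Adj := fun u v =>
  inferInstanceAs (Decidable (u ≠ v ∧ ¬(u.1 = v.1 ∧ u.2.1 + v.2.1 = c)))

lemma no_copy (r m k t q : ℕ) (hm : 1 ≤ m) (hmk : 10*m ≤ k) (ht : t = k - 2*m - 1) :
    ¬ ContainsCopy (Gc t r q) (Hc r k m) := by
  rintro ⟨φ, hφ⟩
  set ψ : Fin k → Fin t := fun x => (φ x).1 with hψ
  have hpart : ∀ u v : Fin k, u ≠ v → ψ u = ψ v →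
      ((u:ℕ)/2 = (v:ℕ)/2 ∧ (u:ℕ)/2 < m) := by
    intro u v hne hp
    by_contra hM
    have hadj : (Hc r k m ((φ u).2.1 + (φ v).2.1)).Adj u v := ⟨hne, Or.inr hM⟩
    exact (hφ _ u v hadj).2 ⟨hp, rfl⟩
  have hk2 : 2*m + 1 ≤ k := by omega
  have he1 : ∀ s : Fin m, 2*(s:ℕ) < k := by intro s; have := s.2; omega
  have he2 : ∀ s : Fin m, 2*(s:ℕ)+1 < k := by intro s; have := s.2; omega
  set P : Finset (Fin m) :=
    univ.filter (fun s : Fin m => ψ ⟨2*s.1, he1 s⟩ = ψ ⟨2*s.1+1, he2 s⟩) with hP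
  have hfib2 : ∀ j : Fin t, ((univ : Finset (Fin k)).filter fun x => ψ x = j).card ≤ 2 := by
    intro j
    by_contra hcon
    have hgt : 2 < ((univ : Finset (Fin k)).filter fun x => ψ x = j).card := by omega
    obtain ⟨x, hx, y, hy, z, hz, hxy, hxz, hyz⟩ := Finset.two_lt_card.mp hgt
    simp only [Finset.mem_filter, Finset.mem_univ, true_and] at hx hy hz
    obtain ⟨exy, _⟩ := hpart x y hxy (hx.trans hy.symm)
    obtain ⟨exz, _⟩ := hpart x z hxz (hx.trans hz.symm)
    have h1 : (x:ℕ) ≠ (y:ℕ) := fun h => hxy (Fin.ext h)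
    have h2 : (x:ℕ) ≠ (z:ℕ) := fun h => hxz (Fin.ext h)
    have h3 : (y:ℕ) ≠ (z:ℕ) := fun h => hyz (Fin.ext h)
    omega
  have hmain : ∀ j : Fin t,
      ((univ : Finset (Fin k)).filter fun x => ψ x = j).card ≤
        1 + (P.filter fun s : Fin m => ψ ⟨2*s.1, he1 s⟩ = j).card := by
    intro j
    rcases Nat.lt_or_ge ((univ : Finset (Fin k)).filter fun x => ψ x = j).card 2 with h | h
    · omega
    · have hgt : 1 < ((univ : Finset (Fin k)).filter fun x => ψ x = j).card := by omega
      obtain ⟨x, hx, y, hy, hxy⟩ := Finset.one_lt_card.mp hgt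
      simp only [Finset.mem_filter, Finset.mem_univ, true_and] at hx hy
      obtain ⟨hdiv, hlt⟩ := hpart x y hxy (hx.trans hy.symm)
      have hne : (x:ℕ) ≠ (y:ℕ) := fun h => hxy (Fin.ext h)
      have hcases : ((x:ℕ) = 2*((x:ℕ)/2) ∧ (y:ℕ) = 2*((x:ℕ)/2)+1) ∨
          ((x:ℕ) = 2*((x:ℕ)/2)+1 ∧ (y:ℕ) = 2*((x:ℕ)/2)) := by omega
      have hA1 : ψ ⟨2*((x:ℕ)/2), he1 ⟨(x:ℕ)/2, hlt⟩⟩ = j := by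
        rcases hcases with ⟨a, b⟩ | ⟨a, b⟩
        · rw [show (⟨2*((x:ℕ)/2), he1 ⟨(x:ℕ)/2, hlt⟩⟩ : Fin k) = x from
            Fin.ext (by show 2*((x:ℕ)/2) = (x:ℕ); omega)]
          exact hx
        · rw [show (⟨2*((x:ℕ)/2), he1 ⟨(x:ℕ)/2, hlt⟩⟩ : Fin k) = y from
            Fin.ext (by show 2*((x:ℕ)/2) = (y:ℕ); omega)]
          exact hy
      have hA2 : ψ ⟨2*((x:ℕ)/2)+1, he2 ⟨(x:ℕ)/2, hlt⟩⟩ = j := by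
        rcases hcases with ⟨a, b⟩ | ⟨a, b⟩
        · rw [show (⟨2*((x:ℕ)/2)+1, he2 ⟨(x:ℕ)/2, hlt⟩⟩ : Fin k) = y from
            Fin.ext (by show 2*((x:ℕ)/2)+1 = (y:ℕ); omega)]
          exact hy
        · rw [show (⟨2*((x:ℕ)/2)+1, he2 ⟨(x:ℕ)/2, hlt⟩⟩ : Fin k) = x from
            Fin.ext (by show 2*((x:ℕ)/2)+1 = (x:ℕ); omega)]
          exact hx
      have hmem : (⟨(x:ℕ)/2, hlt⟩ : Fin m) ∈
          P.filter fun s : Fin m => ψ ⟨2*s.1, he1 s⟩ = j := by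
        refine Finset.mem_filter.mpr ⟨Finset.mem_filter.mpr ⟨Finset.mem_univ _, ?_⟩, ?_⟩
        · show ψ ⟨2*((x:ℕ)/2), _⟩ = ψ ⟨2*((x:ℕ)/2)+1, _⟩
          rw [hA1, hA2]
        · exact hA1
      have hpos : 1 ≤ (P.filter fun s : Fin m => ψ ⟨2*s.1, he1 s⟩ = j).card :=
        Finset.card_pos.mpr ⟨_, hmem⟩
      have := hfib2 j
      omega
  have hsum1 : (univ : Finset (Fin k)).card =
      ∑ j ∈ (univ : Finset (Fin t)), ((univ : Finset (Fin k)).filter fun x => ψ x = j).card :=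
    Finset.card_eq_sum_card_fiberwise (fun x _ => Finset.mem_univ _)
  have hsum2 : P.card =
      ∑ j ∈ (univ : Finset (Fin t)), (P.filter fun s : Fin m => ψ ⟨2*s.1, he1 s⟩ = j).card :=
    Finset.card_eq_sum_card_fiberwise (fun x _ => Finset.mem_univ _)
  have hPle : P.card ≤ m := by
    have := Finset.card_filter_le (univ : Finset (Fin m))
      (fun s : Fin m => ψ ⟨2*s.1, he1 s⟩ = ψ ⟨2*s.1+1, he2 s⟩)
    simpa using this
  have hkle : k ≤ t + m := by
    have hcalc : (univ : Finset (Fin k)).card ≤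
        ∑ j ∈ (univ : Finset (Fin t)), (1 + (P.filter fun s : Fin m => ψ ⟨2*s.1, he1 s⟩ = j).card) := by
      rw [hsum1]; exact Finset.sum_le_sum (fun j _ => hmain j)
    rw [Finset.sum_add_distrib, Finset.sum_const, smul_eq_mul, mul_one, ← hsum2] at hcalc
    have hcard1 : (univ : Finset (Fin k)).card = k := by simp
    have hcard2 : (univ : Finset (Fin t)).card = t := by simp
    omega
  omega

lemma Gc_edges (t r q : ℕ) (c : Fin r) :
    (t*r*q) * (t*r*q) ≤
      2 * (Gc t r q c).edgeFinset.card + ((t*r*q) + (t*r*q) * q) := by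
  classical
  have hcW : Fintype.card (Fin t × Fin r × Fin q) = t*r*q := by
    simp [Fintype.card_prod, mul_assoc]
  have h2e : 2 * (Gc t r q c).edgeFinset.card =
      ((univ : Finset ((Fin t × Fin r × Fin q) × (Fin t × Fin r × Fin q))).filter
        fun x => (Gc t r q c).Adj x.1 x.2).card := by
    rw [SimpleGraph.two_mul_card_edgeFinset]
  have hsplit := Finset.card_filter_add_card_filter_not
    (s := (univ : Finset ((Fin t × Fin r × Fin q) × (Fin t × Fin r × Fin q))))
    (p := fun x => (Gc t r q c).Adj x.1 x.2)
  set B1 : Finset ((Fin t × Fin r × Fin q) × (Fin t × Fin r × Fin q)) :=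
    univ.filter (fun x => x.1 = x.2) with hB1def
  set B2 : Finset ((Fin t × Fin r × Fin q) × (Fin t × Fin r × Fin q)) :=
    univ.filter (fun x => x.1.1 = x.2.1 ∧ x.1.2.1 + x.2.2.1 = c) with hB2def
  have hsub : (univ.filter fun x : (Fin t × Fin r × Fin q) × (Fin t × Fin r × Fin q) =>
      ¬ (Gc t r q c).Adj x.1 x.2) ⊆ B1 ∪ B2 := by
    intro x hx
    simp only [Finset.mem_filter, Finset.mem_univ, true_and, Finset.mem_union,
      hB1def, hB2def] at hx ⊢
    by_cases h : x.1 = x.2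
    · exact Or.inl h
    · right
      by_contra h2
      exact hx ⟨h, h2⟩
  have hB1 : B1.card ≤ t*r*q := by
    have h := Finset.card_le_card_of_injOn (f := Prod.fst) (s := B1)
      (t := (univ : Finset (Fin t × Fin r × Fin q)))
      (fun a _ => Finset.mem_univ _) ?_
    · simpa [hcW] using h
    · intro a ha b hb hab
      simp only [hB1def, Finset.coe_filter, Set.mem_setOf_eq, Finset.mem_univ, true_and] at ha hb
      exact Prod.ext hab (by rw [← ha, ← hb, hab])
  have hB2 : B2.card ≤ (t*r*q) * q := by
    have h := Finset.card_le_card_of_injOn (f := fun x => (x.1, x.2.2.2)) (s := B2)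
      (t := (univ : Finset ((Fin t × Fin r × Fin q) × Fin q)))
      (fun a _ => Finset.mem_univ _) ?_
    · simpa [hcW] using h
    · intro a ha b hb hab
      simp only [hB2def, Finset.coe_filter, Set.mem_setOf_eq, Finset.mem_univ, true_and] at ha hb
      have hab' : (a.1, a.2.2.2) = (b.1, b.2.2.2) := hab
      obtain ⟨h1, h4⟩ := Prod.mk.inj hab'
      have h2 : a.2.1 = b.2.1 := by rw [← ha.1, ← hb.1, h1]
      have h3 : a.2.2.1 = b.2.2.1 := by
        have hb' : a.1.2.1 + b.2.2.1 = c := by rw [h1]; exact hb.2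
        exact add_left_cancel (ha.2.trans hb'.symm)
      exact Prod.ext h1 (Prod.ext h2 (Prod.ext h3 h4))
  have hcWW : (univ : Finset ((Fin t × Fin r × Fin q) × (Fin t × Fin r × Fin q))).card
      = (t*r*q) * (t*r*q) := by
    simp [Finset.card_univ, hcW]
  have hunion := Finset.card_union_le B1 B2
  have hneg := Finset.card_le_card hsub
  omega

/-- The construction showing that the main theorem is tight up to the constant factor:
for every even `r ≥ 2` and `m ≥ 1`, `k` with `10m ≤ k`, there is an `r`-edge-colored graph
`H'` with chromatic number `k` and reduced maximum matching number at least `m` such that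
for every `n` divisible by `r(k-2m-1)` there are graphs `G 1, …, G r` on `n` common
vertices, each with at least `C(n,2) - n²/(2r(k-2m-1))` edges, whose colored union
contains no copy of `H'`. -/
theorem construction_main_theorem_tight (r m k : ℕ) (hr : 2 ≤ r) (hre : Even r)
    (hm : 1 ≤ m) (hmk : 10*m ≤ k) :
    ∃ (V : Type) (_ : Fintype V) (H' : Fin r → SimpleGraph V),
      (⨆ i, H' i).chromaticNumber = (k : ℕ∞) ∧
      HasRMMatching H' k m ∧
      ∀ n : ℕ, r*(k - 2*m - 1) ∣ n →
        ∃ (W : Type) (_ : Fintype W), Fintype.card W = n ∧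
          ∃ G : Fin r → SimpleGraph W,
            (∀ i, (n : ℝ)*((n : ℝ)-1)/2 - (n : ℝ)^2/(2*r*((k : ℝ)-2*m-1))
                ≤ ((G i).edgeSet.ncard : ℝ)) ∧
            ¬ ContainsCopy G H' := by
  classical
  have hr0 : 0 < r := by omega
  refine ⟨Fin k, inferInstance, Hc r k m, ?_, ?_, ?_⟩
  · have hsup : (⨆ i, Hc r k m i) = ⊤ := by
      apply le_antisymm le_top
      refine le_trans ?_ (le_iSup (Hc r k m) ⟨0, hr0⟩)
      intro u v h
      exact ⟨h.ne, Or.inl rfl⟩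
    rw [hsup, SimpleGraph.chromaticNumber_top]
    simp
  · refine ⟨SimpleGraph.Coloring.mk (fun v => v) (fun h => h.ne),
      fun j => (⟨2*j.1, by have := j.2; omega⟩, ⟨2*j.1+1, by have := j.2; omega⟩),
      ?_, ?_, ?_⟩
    · intro a b hab
      obtain ⟨ja, ba⟩ := a; obtain ⟨jb, bb⟩ := b
      cases ba <;> cases bb <;>
        simp only [Bool.false_eq_true, if_true, if_false, Fin.mk.injEq] at hab <;>
        first
          | (exfalso; omega)
          | (simp only [Prod.mk.injEq]; exact ⟨Fin.ext (by omega), trivial⟩)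
    · intro j
      simp only [ne_eq, Fin.mk.injEq]
      omega
    · intro j
      refine ⟨⟨0, hr0⟩, ⟨⟨2*j.1, by have := j.2; omega⟩, ⟨2*j.1+1, by have := j.2; omega⟩,
        ⟨⟨by simp only [ne_eq, Fin.mk.injEq]; omega, Or.inl rfl⟩, rfl, rfl⟩⟩, ?_⟩
      rintro c ⟨u, v, hadj, hu, hv⟩
      have hu' : u = ⟨2*j.1, by have := j.2; omega⟩ := hu
      have hv' : v = ⟨2*j.1+1, by have := j.2; omega⟩ := hv
      rw [hu', hv'] at hadj
      rcases hadj.2 with h | h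
      · exact Fin.ext h
      · exfalso
        refine h ⟨?_, ?_⟩
        · show (2*j.1)/2 = (2*j.1+1)/2
          omega
        · show (2*j.1)/2 < m
          have := j.2
          omega
  · intro n hdvd
    obtain ⟨q, hq⟩ := hdvd
    set t := k - 2*m - 1 with htdef
    refine ⟨Fin t × Fin r × Fin q, inferInstance, ?_, Gc t r q, ?_, ?_⟩
    · simp only [Fintype.card_prod, Fintype.card_fin]
      rw [hq]; ring
    · intro i
      have key := Gc_edges t r q i
      have hn' : t*r*q = n := by rw [hq]; ring
      rw [hn'] at key
      rw [← SimpleGraph.coe_edgeFinset, Set.ncard_coe_finset]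
      have hkt : ((k:ℝ) - 2*(m:ℝ) - 1) = (t:ℝ) := by
        have h1 : t + (2*m+1) = k := by omega
        have h1R : (t:ℝ) + (2*(m:ℝ)+1) = (k:ℝ) := by exact_mod_cast h1
        linarith
      rw [hkt]
      have hrpos : (0:ℝ) < (r:ℝ) := by exact_mod_cast hr0
      have htpos : (0:ℝ) < (t:ℝ) := by
        have : 0 < t := by omega
        exact_mod_cast this
      have hnR : (n:ℝ) = (r:ℝ)*(t:ℝ)*(q:ℝ) := by exact_mod_cast hq
      have hfrac : (n:ℝ)^2/(2*(r:ℝ)*(t:ℝ)) = (n:ℝ)*(q:ℝ)/2 := by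
        rw [hnR]; field_simp
      rw [hfrac]
      have keyR : (n:ℝ)*(n:ℝ) ≤ 2*((Gc t r q i).edgeFinset.card:ℝ) + ((n:ℝ) + (n:ℝ)*(q:ℝ)) := by
        exact_mod_cast key
      linarith
    · exact no_copy r m k t q hm hmk htdef
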